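/- Let n ≥ 1 and let C_{4n} be the cycle with vertices v_1, v_2, …, v_{4n} in cyclic order. Define f by: f(v_i) = (i−1)/2 if i is odd; f(v_i) = 4n + 1 − i/2 if i is even and i ≤ 2n; f(v_i) = 4n − i/2 if i is even and i > 2n. Then f is a graceful labelling of C_{4n}; in particular, every cycle C_{4n} is graceful. -/

import Mathlib

/-- The edge label induced by a vertex labelling `f`: the absolute difference of the
labels of the two endpoints. -/
def edgeLabel {V : Type*} (f : V → ℕ) : Sym2 V → ℕ :=
  Sym2.lift ⟨fun u v => Nat.dist (f u) (f v), fun u v => Nat.dist_comm (f u) (f v)⟩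

/-- `f` is a graceful labelling of the graph `G` with `m` edges: `f` is an injective
map into `{0,…,m}` and the induced edge labelling is a bijection from the edge set
onto `{1,…,m}`. -/
def IsGraceful {V : Type*} (G : SimpleGraph V) (m : ℕ) (f : V → ℕ) : Prop :=
  Function.Injective f ∧ (∀ v, f v ≤ m) ∧
    Set.InjOn (edgeLabel f) G.edgeSet ∧
    edgeLabel f '' G.edgeSet = Set.Icc 1 m

/-- `f` is a near graceful labelling of the graph `G` with `m` edges: `f` is an injective
map into `{0,…,m+1}` and the induced edge labelling is a bijection from the edge set
onto `{1,…,m-1,m}` or onto `{1,…,m-1,m+1}`. -/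
def IsNearGraceful {V : Type*} (G : SimpleGraph V) (m : ℕ) (f : V → ℕ) : Prop :=
  Function.Injective f ∧ (∀ v, f v ≤ m + 1) ∧
    Set.InjOn (edgeLabel f) G.edgeSet ∧
    (edgeLabel f '' G.edgeSet = Set.Icc 1 m ∨
      edgeLabel f '' G.edgeSet = Set.Icc 1 (m + 1) \ {m})
/-- The cycle graph of length `t`, on vertex set `ZMod t`, consecutive residues adjacent. -/
def cycleG (t : ℕ) : SimpleGraph (ZMod t) where
  Adj x y := x ≠ y ∧ (y = x + 1 ∨ x = y + 1)
  symm := ⟨fun _ _ h => ⟨h.1.symm, h.2.symm⟩⟩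
  loopless := ⟨fun _ h => h.1 rfl⟩

namespace Stmt3Aux

/-- The labelling as a function of `x.val`. -/
def F (n j : ℕ) : ℕ :=
  if j % 2 = 0 then j / 2
  else if j < 2 * n then 4 * n + 1 - (j + 1) / 2
  else 4 * n - (j + 1) / 2

/-- The edge label of the edge from `v` to `v+1` as a function of `v.val`. -/
def E (n j : ℕ) : ℕ :=
  if j < 2 * n then 4 * n - j
  else if j = 4 * n - 1 then 2 * n
  else 4 * n - 1 - j

lemma F_inj {n a b : ℕ} (ha : a < 4 * n) (hb : b < 4 * n) (h : F n a = F n b) : a = b := by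
  unfold F at h; split_ifs at h <;> omega

lemma F_le {n j : ℕ} (hj : j < 4 * n) : F n j ≤ 4 * n := by
  unfold F; split_ifs <;> omega

lemma E_inj {n a b : ℕ} (ha : a < 4 * n) (hb : b < 4 * n) (h : E n a = E n b) : a = b := by
  unfold E at h; split_ifs at h <;> omega

lemma E_mem {n j : ℕ} (hn : 1 ≤ n) (hj : j < 4 * n) : 1 ≤ E n j ∧ E n j ≤ 4 * n := by
  unfold E; split_ifs <;> omega

lemma E_surj {n k : ℕ} (hn : 1 ≤ n) (h1 : 1 ≤ k) (h2 : k ≤ 4 * n) :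
    ∃ j, j < 4 * n ∧ E n j = k := by
  rcases lt_trichotomy k (2 * n) with h | h | h
  · exact ⟨4 * n - 1 - k, by unfold E; split_ifs <;> omega⟩
  · exact ⟨4 * n - 1, by unfold E; split_ifs <;> omega⟩
  · exact ⟨4 * n - k, by unfold E; split_ifs <;> omega⟩

lemma F_dist {n j : ℕ} (hn : 1 ≤ n) (hj : j < 4 * n) :
    Nat.dist (F n j) (F n ((j + 1) % (4 * n))) = E n j := by
  by_cases h : j + 1 < 4 * n
  · rw [Nat.mod_eq_of_lt h]
    show F n j - F n (j+1) + (F n (j+1) - F n j) = E n j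
    unfold F E; split_ifs <;> omega
  · rw [show j + 1 = 4 * n by omega, Nat.mod_self]
    show F n j - F n 0 + (F n 0 - F n j) = E n j
    unfold F E; split_ifs <;> omega

end Stmt3Aux

open Stmt3Aux in
/-- (Rosa) Let `n ≥ 1` and let `C_{4n}` be the cycle with vertices
`v_1, …, v_{4n}` in cyclic order (here vertex `v_i` is the residue `i - 1` in `ZMod (4n)`).
Define `f(v_i) = (i-1)/2` if `i` is odd, `f(v_i) = 4n + 1 - i/2` if `i` is even and
`i ≤ 2n`, and `f(v_i) = 4n - i/2` if `i` is even and `i > 2n`.  Then `f` is a graceful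
labelling of `C_{4n}`; in particular every cycle `C_{4n}` is graceful. -/
theorem stmt_3 (n : ℕ) (hn : 1 ≤ n) (f : ZMod (4 * n) → ℕ)
    (hf : ∀ i : ℕ, 1 ≤ i → i ≤ 4 * n →
      f ((i - 1 : ℕ) : ZMod (4 * n)) =
        if i % 2 = 1 then (i - 1) / 2
        else if i ≤ 2 * n then 4 * n + 1 - i / 2
        else 4 * n - i / 2) :
    IsGraceful (cycleG (4 * n)) (4 * n) f ∧
      ∃ g : ZMod (4 * n) → ℕ, IsGraceful (cycleG (4 * n)) (4 * n) g := by
  haveI : NeZero (4 * n) := ⟨by omega⟩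
  haveI : Fact (1 < 4 * n) := ⟨by omega⟩
  -- f x = F n x.val
  have hfF : ∀ x : ZMod (4 * n), f x = F n x.val := by
    intro x
    have hv : x.val < 4 * n := x.val_lt
    have h := hf (x.val + 1) (by omega) (by omega)
    rw [show x.val + 1 - 1 = x.val from rfl, ZMod.natCast_rightInverse x] at h
    rw [h]
    unfold F
    split_ifs <;> omega
  -- edge label along the cycle
  have hEL : ∀ x : ZMod (4 * n), edgeLabel f s(x, x + 1) = E n x.val := by
    intro x
    have hv : x.val < 4 * n := x.val_lt
    have h1 : (x + 1).val = (x.val + 1) % (4 * n) := by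
      rw [ZMod.val_add, ZMod.val_one]
    simp only [edgeLabel, Sym2.lift_mk]
    rw [hfF, hfF, h1]
    exact F_dist hn hv
  -- edge set description
  have hES : ∀ e ∈ (cycleG (4 * n)).edgeSet, ∃ x : ZMod (4 * n), e = s(x, x + 1) := by
    intro e he
    induction e using Sym2.ind with
    | _ u v =>
      rw [SimpleGraph.mem_edgeSet] at he
      obtain ⟨-, h | h⟩ := he
      · exact ⟨u, by rw [h]⟩
      · exact ⟨v, by rw [h, Sym2.eq_swap]⟩
  have hES' : ∀ x : ZMod (4 * n), s(x, x + 1) ∈ (cycleG (4 * n)).edgeSet := by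
    intro x
    rw [SimpleGraph.mem_edgeSet]
    refine ⟨fun h => ?_, Or.inl rfl⟩
    have : (1 : ZMod (4 * n)) = 0 := by
      have := congrArg (· - x) h
      simpa using this.symm
    exact one_ne_zero this
  have hmain : IsGraceful (cycleG (4 * n)) (4 * n) f := by
    refine ⟨?_, ?_, ?_, ?_⟩
    · intro a b hab
      rw [hfF, hfF] at hab
      exact ZMod.val_injective _ (F_inj a.val_lt b.val_lt hab)
    · intro v; rw [hfF]; exact F_le v.val_lt
    · intro e1 h1 e2 h2 heq
      obtain ⟨x, rfl⟩ := hES e1 h1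
      obtain ⟨y, rfl⟩ := hES e2 h2
      rw [hEL, hEL] at heq
      rw [ZMod.val_injective _ (E_inj x.val_lt y.val_lt heq)]
    · ext k
      simp only [Set.mem_image, Set.mem_Icc]
      constructor
      · rintro ⟨e, he, rfl⟩
        obtain ⟨x, rfl⟩ := hES e he
        rw [hEL]
        exact E_mem hn x.val_lt
      · rintro ⟨h1, h2⟩
        obtain ⟨j, hj, hje⟩ := E_surj hn h1 h2
        refine ⟨s((j : ZMod (4 * n)), (j : ZMod (4 * n)) + 1), hES' _, ?_⟩
        rw [hEL, ZMod.val_cast_of_lt hj, hje]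
  exact ⟨hmain, f, hmain⟩
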